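/- Let S be a projective Kochen-Specker set and let S_1, ..., S_k be all the subsets of S whose elements sum to the identity. Let G be the orthogonality graph of the multiset S_1 ⊎ ... ⊎ S_k (vertices are occurrences of projectors; two vertices adjacent iff the corresponding projectors P, P' satisfy Tr(PP') = 0). Then α(G) < k. -/

import Mathlib

open Matrix

/-- An orthogonal projector: a Hermitian matrix `P` with `P² = P`. -/
def IsProjector {n : ℕ} (P : Matrix (Fin n) (Fin n) ℂ) : Prop :=
  P.IsHermitian ∧ P * P = P

/-- A marking function for a set `S` of projectors: takes values in `{0,1}` on `S`
and sums to `1` over every finite subset of `S` summing to the identity. -/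
def IsMarking {n : ℕ} (S : Set (Matrix (Fin n) (Fin n) ℂ))
    (f : Matrix (Fin n) (Fin n) ℂ → ℕ) : Prop :=
  (∀ P ∈ S, f P ≤ 1) ∧
  ∀ T : Finset (Matrix (Fin n) (Fin n) ℂ), ↑T ⊆ S →
    ∑ P ∈ T, P = 1 → ∑ P ∈ T, f P = 1

/-- A projective Kochen-Specker set: every marking function assigns `1` to two
trace-orthogonal projectors in the set. -/
def IsProjKS {n : ℕ} (S : Set (Matrix (Fin n) (Fin n) ℂ)) : Prop :=
  ∀ f, IsMarking S f →
    ∃ P ∈ S, ∃ P' ∈ S, (P * P').trace = 0 ∧ f P = 1 ∧ f P' = 1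

/-- A finite set of vectors forming an orthonormal basis of `ℂⁿ`. -/
def IsONBasis {n : ℕ} (b : Finset (Fin n → ℂ)) : Prop :=
  (∀ u ∈ b, ∀ v ∈ b, star u ⬝ᵥ v = if u = v then 1 else 0) ∧ b.card = n

/-- A marking function for a set `S'` of unit vectors: takes values in `{0,1}` on `S'`
and sums to `1` over every orthonormal basis contained in `S'`. -/
def IsVecMarking {n : ℕ} (S' : Set (Fin n → ℂ)) (f : (Fin n → ℂ) → ℕ) : Prop :=
  (∀ v ∈ S', f v ≤ 1) ∧
  ∀ b : Finset (Fin n → ℂ), ↑b ⊆ S' → IsONBasis b → ∑ v ∈ b, f v = 1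

/-- A weak Kochen-Specker set: every marking function assigns `1` to two
orthogonal vectors in the set. -/
def IsWeakKS {n : ℕ} (S' : Set (Fin n → ℂ)) : Prop :=
  ∀ f, IsVecMarking S' f →
    ∃ u ∈ S', ∃ v ∈ S', star u ⬝ᵥ v = 0 ∧ f u = 1 ∧ f v = 1

/-- The independence number of a graph: the supremum of sizes of independent sets. -/
noncomputable def indepNum {V : Type*} (G : SimpleGraph V) : ℕ :=
  sSup {m | ∃ s : Finset V, (∀ x ∈ s, ∀ y ∈ s, x ≠ y → ¬ G.Adj x y) ∧ s.card = m}

/-- The orthogonality graph of the multiset union `𝒮 0 ⊎ ... ⊎ 𝒮 (k-1)`: vertices are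
occurrences of projectors, and two distinct occurrences are adjacent iff the
corresponding projectors are trace-orthogonal. -/
def orthogonalityGraph {n k : ℕ} (𝒮 : Fin k → Finset (Matrix (Fin n) (Fin n) ℂ)) :
    SimpleGraph (Σ i : Fin k, {P : Matrix (Fin n) (Fin n) ℂ // P ∈ 𝒮 i}) where
  Adj x y := x ≠ y ∧ ((x.2 : Matrix (Fin n) (Fin n) ℂ) * (y.2 : Matrix (Fin n) (Fin n) ℂ)).trace = 0
  symm := ⟨fun x y h => ⟨h.1.symm, by rw [Matrix.trace_mul_comm]; exact h.2⟩⟩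
  loopless := ⟨fun x h => h.1 rfl⟩


theorem traceAA {n : ℕ} (A : Matrix (Fin n) (Fin n) ℂ) :
    (Aᴴ * A).trace = ((∑ j, ∑ i, Complex.normSq (A i j) : ℝ) : ℂ) := by
  push_cast
  rw [Matrix.trace]
  simp only [Matrix.diag_apply, Matrix.mul_apply, Matrix.conjTranspose_apply]
  refine Finset.sum_congr rfl fun j _ => Finset.sum_congr rfl fun i _ => ?_
  rw [Complex.normSq_eq_conj_mul_self]; rfl

theorem sumNormSq_eq_zero {n : ℕ} (A : Matrix (Fin n) (Fin n) ℂ)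
    (h : (∑ j, ∑ i, Complex.normSq (A i j) : ℝ) = 0) : A = 0 := by
  ext i j
  have h1 := (Finset.sum_eq_zero_iff_of_nonneg (fun j _ =>
    Finset.sum_nonneg fun i _ => Complex.normSq_nonneg _)).mp h j (Finset.mem_univ j)
  have h2 := (Finset.sum_eq_zero_iff_of_nonneg (fun i _ =>
    Complex.normSq_nonneg _)).mp h1 i (Finset.mem_univ i)
  simpa using Complex.normSq_eq_zero.mp h2

theorem projZero {n : ℕ} (A : Matrix (Fin n) (Fin n) ℂ) (hH : A.IsHermitian)
    (hI : A * A = A) (ht : A.trace = 0) : A = 0 := by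
  have h1 : Aᴴ * A = A := by rw [hH, hI]
  rw [← h1, traceAA] at ht
  exact sumNormSq_eq_zero A (by exact_mod_cast ht)

theorem orth_of_sum_one {n : ℕ} (T : Finset (Matrix (Fin n) (Fin n) ℂ))
    (hproj : ∀ P ∈ T, Pᴴ = P ∧ P * P = P) (hsum : ∑ P ∈ T, P = 1) :
    ∀ P ∈ T, ∀ Q ∈ T, P ≠ Q → (P * Q).trace = 0 := by
  intro P hP Q hQ hne
  obtain ⟨hPh, hPi⟩ := hproj P hP
  have h1 : ∑ R ∈ T, P * R * P = P := by
    rw [show (∑ R ∈ T, P * R * P) = P * (∑ R ∈ T, R) * P from by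
      rw [Finset.mul_sum, Finset.sum_mul], hsum, mul_one, hPi]
  have h2 : ∑ R ∈ T.erase P, P * R * P = 0 := by
    have h := Finset.add_sum_erase T (fun R => P * R * P) hP
    rw [h1, hPi, hPi] at h
    exact add_eq_left.mp h
  have key : ∀ R ∈ T.erase P, (P * R * P).trace
      = ((∑ j, ∑ i, Complex.normSq ((R * P) i j) : ℝ) : ℂ) := by
    intro R hR
    obtain ⟨hRh, hRi⟩ := hproj R (Finset.mem_of_mem_erase hR)
    have hc : (R * P)ᴴ * (R * P) = P * R * P := by
      rw [conjTranspose_mul, hRh, hPh, ← mul_assoc, mul_assoc P R R, hRi]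
    rw [← hc, traceAA]
  have h3 : ∑ R ∈ T.erase P, (∑ j, ∑ i, Complex.normSq ((R * P) i j) : ℝ) = 0 := by
    have h4 : ∑ R ∈ T.erase P, ((P * R * P).trace) = 0 := by
      rw [← Matrix.trace_sum, h2, Matrix.trace_zero]
    rw [Finset.sum_congr rfl key] at h4
    exact_mod_cast h4
  have hQe : Q ∈ T.erase P := Finset.mem_erase.mpr ⟨hne.symm, hQ⟩
  have h5 := (Finset.sum_eq_zero_iff_of_nonneg (fun R _ =>
    Finset.sum_nonneg fun j _ => Finset.sum_nonneg fun i _ =>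
      Complex.normSq_nonneg _)).mp h3 Q hQe
  have h6 : (P * Q * P).trace = 0 := by rw [key Q hQe, h5]; norm_num
  calc (P * Q).trace = ((P * P) * Q).trace := by rw [hPi]
    _ = ((P * Q) * P).trace := by rw [mul_assoc]; exact Matrix.trace_mul_comm _ _
    _ = 0 := h6

/-- If `S` is a projective KS set and `𝒮 1, ..., 𝒮 k` are (exactly) all the subsets
of `S` summing to the identity, then the orthogonality graph of their multiset
union satisfies `α(G) < k`. -/
theorem stmt_11 {n k : ℕ} (S : Finset (Matrix (Fin n) (Fin n) ℂ))
    (hproj : ∀ P ∈ S, IsProjector P)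
    (hKS : IsProjKS (S : Set (Matrix (Fin n) (Fin n) ℂ)))
    (𝒮 : Fin k → Finset (Matrix (Fin n) (Fin n) ℂ))
    (hinj : Function.Injective 𝒮)
    (hall : ∀ T : Finset (Matrix (Fin n) (Fin n) ℂ),
      (T ⊆ S ∧ ∑ P ∈ T, P = 1) ↔ ∃ i, T = 𝒮 i) :
    indepNum (orthogonalityGraph 𝒮) < k := by
  classical
  have hsub : ∀ i : Fin k, 𝒮 i ⊆ S ∧ ∑ P ∈ 𝒮 i, P = 1 := fun i => (hall (𝒮 i)).mpr ⟨i, rfl⟩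
  have horth : ∀ i : Fin k, ∀ P ∈ 𝒮 i, ∀ Q ∈ 𝒮 i, P ≠ Q → (P * Q).trace = 0 := fun i =>
    orth_of_sum_one (𝒮 i) (fun P hP => hproj P ((hsub i).1 hP)) (hsub i).2
  have key : ∀ s : Finset (Σ i : Fin k, {P : Matrix (Fin n) (Fin n) ℂ // P ∈ 𝒮 i}),
      (∀ x ∈ s, ∀ y ∈ s, x ≠ y → ¬ (orthogonalityGraph 𝒮).Adj x y) → s.card < k := by
    intro s hs
    have hone : ∀ x ∈ s, ∀ y ∈ s, x.1 = y.1 → x = y := by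
      intro x hx y hy hxy
      by_contra hne
      rcases x with ⟨i, P, hP⟩
      rcases y with ⟨j, Qm, hQ⟩
      dsimp at hxy; subst hxy
      have hPQ : P ≠ Qm := by
        intro h; subst h; exact hne rfl
      exact hs _ hx _ hy hne ⟨hne, horth i P hP Qm hQ hPQ⟩
    have hle : s.card ≤ k := by
      have := Finset.card_le_card_of_injOn (fun x => x.1)
        (fun x _ => Finset.mem_univ x.1) (fun x hx y hy h => hone x hx y hy h)
      simpa using this
    rcases lt_or_eq_of_le hle with h | hcard
    · exact h
    exfalso
    have hsurj : ∀ i : Fin k, ∃ x, x ∈ s ∧ x.1 = i := by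
      have himg : s.image (fun x => x.1) = Finset.univ := by
        apply Finset.eq_univ_of_card
        rw [Finset.card_image_of_injOn (fun x hx y hy h => hone x hx y hy h), hcard,
          Fintype.card_fin]
      intro i
      have : i ∈ s.image (fun x => x.1) := himg ▸ Finset.mem_univ i
      rcases Finset.mem_image.mp this with ⟨x, hx, hxi⟩
      exact ⟨x, hx, hxi⟩
    choose v hv hvi using hsurj
    set Q : Fin k → Matrix (Fin n) (Fin n) ℂ :=
      fun i => ((v i).2 : Matrix (Fin n) (Fin n) ℂ) with hQdef
    have hmemgen : ∀ (x : Σ i : Fin k, {P : Matrix (Fin n) (Fin n) ℂ // P ∈ 𝒮 i}) (i : Fin k),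
        x.1 = i → (x.2 : Matrix (Fin n) (Fin n) ℂ) ∈ 𝒮 i := by
      rintro ⟨i', P, hP⟩ i h
      dsimp at h
      subst h
      exact hP
    have hQmem : ∀ i, Q i ∈ 𝒮 i := fun i => hmemgen (v i) i (hvi i)
    set f : Matrix (Fin n) (Fin n) ℂ → ℕ := fun P => if ∃ i, Q i = P then 1 else 0 with hfdef
    have hfle : ∀ P, f P ≤ 1 := fun P => by
      by_cases h : ∃ i, Q i = P <;> simp [hfdef, h]
    have hf1 : ∀ P, f P = 1 ↔ ∃ i, Q i = P := fun P => by
      by_cases h : ∃ i, Q i = P <;> simp [hfdef, h]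
    have hsum1 : ∀ j : Fin k, ∑ P ∈ 𝒮 j, f P = 1 := by
      intro j
      have hz : ∀ P ∈ 𝒮 j, P ≠ Q j → f P = 0 := by
        intro P hP hPne
        by_contra h0
        have hfp1 : f P = 1 := by have := hfle P; omega
        rcases (hf1 P).mp hfp1 with ⟨i, hi⟩
        have hij : i ≠ j := fun h => hPne (by rw [← hi, h])
        have hvij : v i ≠ v j := fun h => hij (by rw [← hvi i, ← hvi j, h])
        have htr : (Q i * Q j).trace = 0 := by
          rw [hi]; exact horth j P hP (Q j) (hQmem j) hPne
        exact hs (v i) (hv i) (v j) (hv j) hvij ⟨hvij, htr⟩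
      rw [Finset.sum_eq_single_of_mem (Q j) (hQmem j) hz]
      exact (hf1 _).mpr ⟨j, rfl⟩
    have hmark : IsMarking (↑S) f := by
      refine ⟨fun P _ => hfle P, ?_⟩
      intro T hT hTsum
      rcases (hall T).mp ⟨Finset.coe_subset.mp hT, hTsum⟩ with ⟨j, rfl⟩
      exact hsum1 j
    rcases hKS f hmark with ⟨P, hPS, P', hP'S, htr, hfP, hfP'⟩
    rcases (hf1 P).mp hfP with ⟨i, hi⟩
    rcases (hf1 P').mp hfP' with ⟨j, hj⟩
    by_cases hij : i = j
    · subst hij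
      have hPP' : P = P' := by rw [← hi, hj]
      subst hPP'
      have hp := hproj P hPS
      have hP0 : P = 0 := projZero P hp.1 hp.2 (by rw [← hp.2]; exact htr)
      by_cases hex : ∃ j : Fin k, j ≠ i
      · rcases hex with ⟨j, hjne⟩
        have hvij : v j ≠ v i := fun h => hjne (by rw [← hvi j, ← hvi i, h])
        refine hs (v j) (hv j) (v i) (hv i) hvij ⟨hvij, ?_⟩
        show ((Q j) * (Q i)).trace = 0
        rw [hi, hP0, mul_zero, Matrix.trace_zero]
      · push_neg at hex
        have h0mem : (0 : Matrix (Fin n) (Fin n) ℂ) ∈ 𝒮 i := by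
          rw [← hP0, ← hi]; exact hQmem i
        by_cases hn : n = 0
        · subst hn
          have hone : (1 : Matrix (Fin 0) (Fin 0) ℂ) = 0 := Subsingleton.elim _ _
          have hemp : (∅ : Finset (Matrix (Fin 0) (Fin 0) ℂ)) ⊆ S ∧
              ∑ P ∈ (∅ : Finset (Matrix (Fin 0) (Fin 0) ℂ)), P = 1 :=
            ⟨by simp, by rw [hone]; simp⟩
          rcases (hall ∅).mp hemp with ⟨j0, hj0⟩
          rw [hex j0] at hj0
          rw [← hj0] at h0mem
          simp at h0mem
        · have hn1 : 0 < n := Nat.pos_of_ne_zero hn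
          haveI : Nonempty (Fin n) := ⟨⟨0, hn1⟩⟩
          have honeZ : (1 : Matrix (Fin n) (Fin n) ℂ) ≠ 0 := one_ne_zero
          have hex0 : ∃ R ∈ 𝒮 i, R ≠ 0 := by
            by_contra hc
            push_neg at hc
            have hz : ∑ R ∈ 𝒮 i, R = 0 := Finset.sum_eq_zero fun R hR => hc R hR
            exact honeZ (by rw [← (hsub i).2, hz])
          rcases hex0 with ⟨R₀, hR₀mem, hR₀ne⟩
          set g : Matrix (Fin n) (Fin n) ℂ → ℕ := fun P => if P = R₀ then 1 else 0 with hgdef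
          have hgmark : IsMarking (↑S) g := by
            constructor
            · intro P _
              by_cases h : P = R₀ <;> simp [hgdef, h]
            · intro T hT hTsum
              rcases (hall T).mp ⟨Finset.coe_subset.mp hT, hTsum⟩ with ⟨j0, rfl⟩
              rw [hex j0]
              rw [Finset.sum_eq_single_of_mem R₀ hR₀mem
                (fun P hP hPne => by simp [hgdef, hPne])]
              simp [hgdef]
          rcases hKS g hgmark with ⟨P₁, hP₁, P₂, hP₂, htr2, hg1, hg2⟩
          have e1 : P₁ = R₀ := by by_contra h; simp [hgdef, h] at hg1
          subst e1
          have e2 : P₂ = P₁ := by by_contra h; simp [hgdef, h] at hg2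
          subst e2
          have hp2 := hproj P₂ hP₁
          exact hR₀ne (projZero P₂ hp2.1 hp2.2 (by rw [← hp2.2]; exact htr2))
    · have hvij : v i ≠ v j := fun h => hij (by rw [← hvi i, ← hvi j, h])
      refine hs (v i) (hv i) (v j) (hv j) hvij ⟨hvij, ?_⟩
      show ((Q i) * (Q j)).trace = 0
      rw [hi, hj]; exact htr
  show sSup _ < k
  have hbdd : BddAbove {m | ∃ s : Finset (Σ i : Fin k, {P : Matrix (Fin n) (Fin n) ℂ // P ∈ 𝒮 i}),
      (∀ x ∈ s, ∀ y ∈ s, x ≠ y → ¬ (orthogonalityGraph 𝒮).Adj x y) ∧ s.card = m} :=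
    ⟨k, fun m hm => by rcases hm with ⟨s, hs, rfl⟩; exact (key s hs).le⟩
  have hne' : {m | ∃ s : Finset (Σ i : Fin k, {P : Matrix (Fin n) (Fin n) ℂ // P ∈ 𝒮 i}),
      (∀ x ∈ s, ∀ y ∈ s, x ≠ y → ¬ (orthogonalityGraph 𝒮).Adj x y) ∧ s.card = m}.Nonempty :=
    ⟨0, ∅, by simp, rfl⟩
  have hk : 0 < k := key ∅ (by simp)
  have hle : sSup {m | ∃ s : Finset (Σ i : Fin k, {P : Matrix (Fin n) (Fin n) ℂ // P ∈ 𝒮 i}),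
      (∀ x ∈ s, ∀ y ∈ s, x ≠ y → ¬ (orthogonalityGraph 𝒮).Adj x y) ∧ s.card = m} ≤ k - 1 := by
    refine csSup_le hne' fun m hm => ?_
    rcases hm with ⟨s, hs, rfl⟩
    exact Nat.le_pred_of_lt (key s hs)
  exact lt_of_le_of_lt hle (Nat.sub_lt hk one_pos)
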